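/- Let W be a standard one-dimensional Brownian motion on a probability space (Ω, 𝓕, ℙ). Then for all real numbers t, a, b, c ∈ (0,∞) with a < b one has E[ 1_{{a ≤ exp(W(t)) ≤ b}} · exp( c · ∫_0^t exp(W(s)) ds ) ] = ∞, where the inner integral is the pathwise Lebesgue integral of the continuous sample path s ↦ exp(W(s,ω)). -/

import Mathlib

set_option maxHeartbeats 1000000
open MeasureTheory ProbabilityTheory Real Filter
open scoped ENNReal NNReal

/-- A standard one-dimensional Brownian motion on a probability space `(Ω, 𝓕, P)`:
a stochastic process `W : [0,∞) × Ω → ℝ` (modelled as `W : ℝ → Ω → ℝ`, relevant only for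
nonnegative times) with `W 0 = 0`, P-almost surely continuous sample paths,
independent increments, and `W t - W s` normally distributed with mean `0` and
variance `t - s` for all `0 ≤ s ≤ t`. -/
structure IsStandardBrownianMotion {Ω : Type*} [MeasurableSpace Ω] (P : Measure Ω)
    (W : ℝ → Ω → ℝ) : Prop where
  isProbabilityMeasure : IsProbabilityMeasure P
  measurable : ∀ t : ℝ, Measurable (W t)
  start : ∀ ω, W 0 ω = 0
  ae_continuous : ∀ᵐ ω ∂P, ContinuousOn (fun t => W t ω) (Set.Ici 0)
  indep_increments : ∀ (n : ℕ) (t : Fin (n + 1) → ℝ), (∀ i, 0 ≤ t i) → Monotone t →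
    iIndepFun
      (fun (i : Fin n) (ω : Ω) => W (t i.succ) ω - W (t i.castSucc) ω) P
  gauss_increments : ∀ s t : ℝ, 0 ≤ s → s ≤ t →
    P.map (fun ω => W t ω - W s ω) = gaussianReal 0 (Real.toNNReal (t - s))

lemma aux_tendsto (c₁ A B : ℝ) (hc : 0 < c₁) :
    Tendsto (fun x : ℝ => c₁ * Real.exp x - A * x ^ 2 - B) atTop atTop := by
  have h1 : Tendsto (fun x : ℝ => x ^ 2 * (c₁ * (Real.exp x / x ^ 2) - A) - B) atTop atTop := by
    apply tendsto_atTop_add_const_right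
    apply Tendsto.atTop_mul_atTop₀ (tendsto_pow_atTop (two_ne_zero))
    apply tendsto_atTop_add_const_right
    exact (tendsto_exp_div_pow_atTop 2).const_mul_atTop hc
  refine h1.congr' ?_
  filter_upwards [eventually_gt_atTop (0:ℝ)] with x hx
  field_simp

lemma gauss_icc_lb (v : ℝ≥0) (hv : v ≠ 0) (x y R : ℝ) (hxy : x ≤ y)
    (hR : ∀ z ∈ Set.Icc x y, z ^ 2 ≤ R ^ 2) :
    ENNReal.ofReal ((y - x) * ((Real.sqrt (2 * π * (v : ℝ)))⁻¹ *
      Real.exp (-R ^ 2 / (2 * (v : ℝ))))) ≤ gaussianReal 0 v (Set.Icc x y) := by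
  rw [gaussianReal_apply_eq_integral 0 hv]
  apply ENNReal.ofReal_le_ofReal
  have hvpos : (0:ℝ) < (v : ℝ) := by positivity
  have hle : ∀ z ∈ Set.Icc x y,
      (Real.sqrt (2 * π * (v : ℝ)))⁻¹ * Real.exp (-R ^ 2 / (2 * (v : ℝ)))
        ≤ gaussianPDFReal 0 v z := by
    intro z hz
    unfold gaussianPDFReal
    apply mul_le_mul_of_nonneg_left _ (by positivity)
    apply Real.exp_le_exp.2
    have h2 := hR z hz
    have h3 : (0:ℝ) < 2 * (v:ℝ) := by positivity
    have h4 : -R ^ 2 ≤ -(z - 0) ^ 2 := by nlinarith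
    exact div_le_div_of_nonneg_right h4 h3.le |>.trans_eq rfl
  calc (y - x) * ((Real.sqrt (2 * π * (v : ℝ)))⁻¹ * Real.exp (-R ^ 2 / (2 * (v : ℝ))))
      = ∫ _ in Set.Icc x y, ((Real.sqrt (2 * π * (v : ℝ)))⁻¹ *
          Real.exp (-R ^ 2 / (2 * (v : ℝ)))) := by
        rw [setIntegral_const, measureReal_def, Real.volume_Icc, ENNReal.toReal_ofReal (by linarith), smul_eq_mul]
    _ ≤ ∫ z in Set.Icc x y, gaussianPDFReal 0 v z := by
        apply setIntegral_mono_on (integrableOn_const (by rw [Real.volume_Icc]; exact ENNReal.ofReal_ne_top))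
          ((integrable_gaussianPDFReal 0 v).integrableOn) measurableSet_Icc hle

noncomputable def bmMsa {Ω : Type*} (W : ℝ → Ω → ℝ) (u η : ℝ) (l : ℕ) : MeasurableSpace Ω :=
  ⨆ j ∈ Finset.Icc 1 (2 ^ l),
    MeasurableSpace.comap (fun ω => W (u + η * (j : ℕ) / (2 : ℝ) ^ l) ω - W u ω)
      Real.measurableSpace

def bmM1 {Ω : Type*} (W : ℝ → Ω → ℝ) (u r t : ℝ) : MeasurableSpace Ω :=
  MeasurableSpace.comap (W u) Real.measurableSpace ⊔
    MeasurableSpace.comap (fun ω => W t ω - W r ω) Real.measurableSpace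

/-- restricted exponential integrals of a geometric Brownian motion:
for all `t, a, b, c ∈ (0,∞)` with `a < b`,
`E[ 1_{a ≤ exp(W t) ≤ b} · exp(c ∫_0^t exp(W s) ds) ] = ∞`. -/
theorem restricted_exponential_integral_of_geometric_brownian_motion_eq_top
    {Ω : Type*} [MeasurableSpace Ω] (P : Measure Ω) (W : ℝ → Ω → ℝ)
    (hW : IsStandardBrownianMotion P W)
    (t a b c : ℝ) (ht : 0 < t) (ha : 0 < a) (hb : 0 < b) (hc : 0 < c) (hab : a < b) :
    ∫⁻ ω in {ω | a ≤ Real.exp (W t ω) ∧ Real.exp (W t ω) ≤ b},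
        ENNReal.ofReal (Real.exp (c * ∫ s in (0:ℝ)..t, Real.exp (W s ω))) ∂P = ∞ := by
  haveI := hW.isProbabilityMeasure
  set lA := Real.log a with hlA
  set lB := Real.log b with hlB
  have hαβ : lA < lB := Real.log_lt_log ha hab
  set γ4 : ℝ := (lB - lA) / 8 with hγ4def
  have hγ4 : 0 < γ4 := by rw [hγ4def]; linarith
  set u : ℝ := t / 2 with hu_def
  have hu : 0 < u := by rw [hu_def]; linarith
  have hu' : u < t := by rw [hu_def]; linarith
  -- the family of "path stays close" events
  set E2 : ℝ → Set Ω := fun η => ⋂ (l : ℕ), ⋂ (j : ℕ) (_ : j ∈ Finset.Icc 1 (2 ^ l)),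
    {ω | |W (u + η * (j : ℝ) / (2 : ℝ) ^ l) ω - W u ω| ≤ γ4} with hE2def
  have hGmeas : ∀ s : ℝ, MeasurableSet {ω | |W s ω - W u ω| ≤ γ4} := by
    intro s
    exact measurableSet_le (((hW.measurable s).sub (hW.measurable u)).abs) measurable_const
  have hE2meas : ∀ η, MeasurableSet (E2 η) := by
    intro η
    exact MeasurableSet.iInter fun l => MeasurableSet.biInter (Finset.Icc 1 (2^l)).countable_toSet
      fun j _ => hGmeas _
  -- choose η with positive probability of staying close
  obtain ⟨k0, hk0⟩ : ∃ k : ℕ, P (E2 (t / 2 ^ (k + 2))) ≠ 0 := by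
    by_contra hcon
    push_neg at hcon
    have hnull : P (⋃ k : ℕ, E2 (t / 2 ^ (k + 2))) = 0 := measure_iUnion_null hcon
    have hone : ∀ᵐ ω ∂P, ω ∈ ⋃ k : ℕ, E2 (t / 2 ^ (k + 2)) := by
      filter_upwards [hW.ae_continuous] with ω hω
      have hcu : ContinuousWithinAt (fun s => W s ω) (Set.Ici 0) u := hω u hu.le
      rw [Metric.continuousWithinAt_iff] at hcu
      obtain ⟨δ, hδpos, hδ⟩ := hcu γ4 hγ4
      obtain ⟨k, hk⟩ : ∃ k : ℕ, t / 2 ^ (k + 2) < δ := by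
        obtain ⟨k, hk⟩ := pow_unbounded_of_one_lt (t / δ) (by norm_num : (1:ℝ) < 2)
        refine ⟨k, ?_⟩
        rw [div_lt_iff₀ (by positivity)]
        calc t = (t / δ) * δ := by field_simp
          _ < 2 ^ k * δ := by exact mul_lt_mul_of_pos_right hk hδpos
          _ ≤ 2 ^ (k + 2) * δ := by
              have : (2:ℝ) ^ k ≤ 2 ^ (k + 2) := by
                apply pow_le_pow_right₀ (by norm_num); omega
              exact mul_le_mul_of_nonneg_right this hδpos.le
          _ = δ * 2 ^ (k + 2) := by ring
      refine Set.mem_iUnion.2 ⟨k, ?_⟩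
      refine Set.mem_iInter.2 fun l => Set.mem_iInter.2 fun j => Set.mem_iInter.2 fun hj => ?_
      obtain ⟨hj1, hj2⟩ := Finset.mem_Icc.1 hj
      set s : ℝ := u + (t / 2 ^ (k + 2)) * (j : ℝ) / (2:ℝ) ^ l with hsdef
      have hjle : (j : ℝ) ≤ (2:ℝ) ^ l := by exact_mod_cast Nat.cast_le.2 hj2
      have hfrac : (t / 2 ^ (k + 2)) * (j : ℝ) / (2:ℝ) ^ l ≤ t / 2 ^ (k + 2) := by
        rw [div_le_iff₀ (by positivity)]
        have h1 : (0:ℝ) ≤ t / 2 ^ (k + 2) := by positivity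
        calc (t / 2 ^ (k + 2)) * (j : ℝ) ≤ (t / 2 ^ (k + 2)) * (2:ℝ) ^ l :=
              mul_le_mul_of_nonneg_left hjle h1
          _ = t / 2 ^ (k + 2) * 2 ^ l := rfl
      have hfrac0 : 0 ≤ (t / 2 ^ (k + 2)) * (j : ℝ) / (2:ℝ) ^ l := by positivity
      have hs0 : (0:ℝ) ≤ s := by rw [hsdef]; linarith
      have hdist : dist s u < δ := by
        rw [Real.dist_eq, hsdef]
        rw [abs_of_nonneg (by linarith)]
        calc u + t / 2 ^ (k + 2) * (j:ℝ) / (2:ℝ) ^ l - u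
            = t / 2 ^ (k + 2) * (j:ℝ) / (2:ℝ) ^ l := by ring
          _ ≤ t / 2 ^ (k + 2) := hfrac
          _ < δ := hk
      have := hδ hs0 hdist
      rw [Real.dist_eq] at this
      exact le_of_lt this
    have hcompl : P ((⋃ k : ℕ, E2 (t / 2 ^ (k + 2)))ᶜ) = 0 := ae_iff.1 hone
    have : (1 : ℝ≥0∞) ≤ 0 := by
      calc (1 : ℝ≥0∞) = P Set.univ := (measure_univ).symm
        _ ≤ P (⋃ k : ℕ, E2 (t / 2 ^ (k + 2))) + P ((⋃ k : ℕ, E2 (t / 2 ^ (k + 2)))ᶜ) := by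
            rw [← Set.union_compl_self (⋃ k : ℕ, E2 (t / 2 ^ (k + 2)))]
            exact measure_union_le _ _
        _ = 0 := by rw [hnull, hcompl, add_zero]
    simp at this
  set η : ℝ := t / 2 ^ (k0 + 2) with hηdef
  have hηpos : 0 < η := by positivity
  have hηle : η ≤ t / 4 := by
    rw [hηdef]
    apply div_le_div_of_nonneg_left ht.le (by norm_num)
    calc (4:ℝ) = 2^2 := by norm_num
    _ ≤ 2^(k0+2) := by apply pow_le_pow_right₀ (by norm_num); omega
  set r : ℝ := u + η with hrdef
  have hrt : r < t := by rw [hrdef, hu_def]; linarith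
  have hur : u < r := by rw [hrdef]; linarith
  -- σ-algebras
  have hle_msa : ∀ l, bmMsa W u η l ≤ ‹MeasurableSpace Ω› := by
    intro l
    apply iSup₂_le
    intro j _
    exact measurable_iff_comap_le.1 (((hW.measurable _).sub (hW.measurable u)))
  have hm1le : bmM1 W u r t ≤ ‹MeasurableSpace Ω› := by
    apply sup_le
    · exact measurable_iff_comap_le.1 (hW.measurable u)
    · exact measurable_iff_comap_le.1 ((hW.measurable t).sub (hW.measurable r))
  have hIndep_l : ∀ l : ℕ, Indep (bmMsa W u η l) (bmM1 W u r t) P := by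
    intro l
    set n : ℕ := 2 ^ l with hn
    have hn1 : 1 ≤ n := Nat.one_le_two_pow
    have hnR : (0:ℝ) < (n:ℝ) := by exact_mod_cast Nat.pos_of_ne_zero (by omega)
    have hcast : ((n:ℕ):ℝ) = (2:ℝ) ^ l := by rw [hn]; push_cast; ring
    set f : ℕ → ℝ := fun p => if p = 0 then 0 else
      if p ≤ n + 1 then u + η * ((p - 1 : ℕ) : ℝ) / n else t with hfdef
    have hf0 : f 0 = 0 := by simp [hfdef]
    have hfmid : ∀ p : ℕ, 1 ≤ p → p ≤ n + 1 → f p = u + η * ((p - 1 : ℕ) : ℝ) / n := by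
      intro p h1 h2
      rw [hfdef]
      simp only []
      rw [if_neg (by omega), if_pos h2]
    have hflast : ∀ p : ℕ, n + 2 ≤ p → f p = t := by
      intro p hp
      rw [hfdef]
      simp only []
      rw [if_neg (by omega), if_neg (by omega)]
    have hfnonneg : ∀ p, 0 ≤ f p := by
      intro p
      rcases Nat.eq_zero_or_pos p with h0 | h1
      · rw [h0, hf0]
      · rcases le_or_gt p (n+1) with h2 | h2
        · rw [hfmid p h1 h2]; positivity
        · rw [hflast p (by omega)]; exact ht.le
    have hfler : ∀ p : ℕ, 1 ≤ p → p ≤ n + 1 → f p ≤ r := by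
      intro p h1 h2
      rw [hfmid p h1 h2, hrdef]
      have hc : ((p - 1 : ℕ) : ℝ) ≤ (n : ℝ) := by
        have hnat : (p - 1 : ℕ) ≤ n := by omega
        exact_mod_cast hnat
      have : η * ((p - 1 : ℕ) : ℝ) / n ≤ η := by
        rw [div_le_iff₀ hnR]
        calc η * ((p - 1 : ℕ) : ℝ) ≤ η * (n:ℝ) := mul_le_mul_of_nonneg_left hc hηpos.le
          _ = η * n := rfl
      linarith
    have hfmono : ∀ p q : ℕ, p ≤ q → f p ≤ f q := by
      intro p q hpq
      rcases Nat.eq_zero_or_pos p with h0 | h1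
      · rw [h0, hf0]; exact hfnonneg q
      · have hq1 : 1 ≤ q := le_trans h1 hpq
        rcases le_or_gt q (n+1) with h2 | h2
        · have hp2 : p ≤ n + 1 := le_trans hpq h2
          rw [hfmid p h1 hp2, hfmid q hq1 h2]
          have hc : ((p - 1 : ℕ) : ℝ) ≤ ((q - 1 : ℕ) : ℝ) := by
            have hnat : (p - 1 : ℕ) ≤ (q - 1 : ℕ) := by omega
            exact_mod_cast hnat
          have h3 : η * ((p - 1 : ℕ) : ℝ) ≤ η * ((q - 1 : ℕ) : ℝ) :=
            mul_le_mul_of_nonneg_left hc hηpos.le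
          have h4 := div_le_div_of_nonneg_right h3 hnR.le
          linarith
        · rw [hflast q (by omega)]
          rcases le_or_gt p (n+1) with hp2 | hp2
          · exact le_trans (hfler p h1 hp2) hrt.le
          · rw [hflast p (by omega)]
    set τ : Fin (n + 2 + 1) → ℝ := fun j => f (j : ℕ) with hτdef
    have hτpos : ∀ i, 0 ≤ τ i := fun i => hfnonneg _
    have hτmono : Monotone τ := fun i j hij => hfmono _ _ hij
    have hX := hW.indep_increments (n + 2) τ hτpos hτmono
    have hXi := (iIndepFun_iff_iIndep _ _ _).1 hX
    have hXmeas : ∀ i : Fin (n + 2),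
        Measurable (fun ω => W (τ i.succ) ω - W (τ i.castSucc) ω) :=
      fun i => (hW.measurable _).sub (hW.measurable _)
    set Sm : Set (Fin (n + 2)) := {i | 1 ≤ (i:ℕ) ∧ (i:ℕ) ≤ n} with hSmdef
    set Tm : Set (Fin (n + 2)) := {i | (i:ℕ) = 0 ∨ (i:ℕ) = n + 1} with hTmdef
    have hST : Disjoint Sm Tm := by
      rw [Set.disjoint_left]
      intro i hi hti
      simp only [hSmdef, hTmdef, Set.mem_setOf_eq] at hi hti
      rcases hti with h | h <;> omega
    have hdisj := indep_iSup_of_disjoint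
      (fun i => measurable_iff_comap_le.1 (hXmeas i)) hXi hST
    -- middle partial sums are measurable w.r.t. the middle block
    have key : ∀ p : ℕ, 1 ≤ p → p ≤ n →
        Measurable[⨆ i ∈ Sm, MeasurableSpace.comap
          (fun ω => W (τ i.succ) ω - W (τ i.castSucc) ω) Real.measurableSpace]
          (fun ω => W (u + η * (p : ℝ) / (n : ℝ)) ω - W u ω) := by
      intro p hp1
      induction p, hp1 using Nat.le_induction with
      | base =>
        intro h1n
        have i1 : Fin (n + 2) := ⟨1, by omega⟩
        have hmem : (⟨1, by omega⟩ : Fin (n + 2)) ∈ Sm := by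
          show 1 ≤ 1 ∧ 1 ≤ n
          exact ⟨le_rfl, h1n⟩
        have heq : (fun ω => W (u + η * ((1:ℕ) : ℝ) / (n : ℝ)) ω - W u ω) =
            fun ω => W (τ (⟨1, by omega⟩ : Fin (n + 2)).succ) ω -
              W (τ (⟨1, by omega⟩ : Fin (n + 2)).castSucc) ω := by
          funext ω
          have e1 : τ (⟨1, by omega⟩ : Fin (n + 2)).succ = u + η * ((1:ℕ) : ℝ) / n := by
            show f 2 = _
            rw [hfmid 2 (by omega) (by omega)]
            try norm_num
          have e0 : τ (⟨1, by omega⟩ : Fin (n + 2)).castSucc = u := by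
            show f 1 = _
            rw [hfmid 1 le_rfl (by omega)]
            try norm_num
          rw [e1, e0]
        have h1 : Measurable[MeasurableSpace.comap
            (fun ω => W (τ (⟨1, by omega⟩ : Fin (n + 2)).succ) ω -
              W (τ (⟨1, by omega⟩ : Fin (n + 2)).castSucc) ω) Real.measurableSpace]
            (fun ω => W (τ (⟨1, by omega⟩ : Fin (n + 2)).succ) ω -
              W (τ (⟨1, by omega⟩ : Fin (n + 2)).castSucc) ω) :=
          measurable_iff_comap_le.2 le_rfl
        have hle := le_iSup₂ (f := fun (i : Fin (n+2)) (_ : i ∈ Sm) =>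
          MeasurableSpace.comap
            (fun ω => W (τ i.succ) ω - W (τ i.castSucc) ω) Real.measurableSpace)
          (⟨1, by omega⟩ : Fin (n + 2)) hmem
        have hM := h1.mono hle le_rfl
        simp only [Nat.cast_one] at heq ⊢
        rw [heq]
        exact hM
      | succ p hp IH =>
        intro hpn
        have hIH := IH (by omega)
        have hmem : (⟨p + 1, by omega⟩ : Fin (n + 2)) ∈ Sm := by
          show 1 ≤ p + 1 ∧ p + 1 ≤ n
          exact ⟨by omega, hpn⟩
        have heq : (fun ω => W (u + η * ((p + 1 : ℕ) : ℝ) / (n : ℝ)) ω - W u ω) =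
            fun ω => (W (τ (⟨p + 1, by omega⟩ : Fin (n + 2)).succ) ω -
              W (τ (⟨p + 1, by omega⟩ : Fin (n + 2)).castSucc) ω) +
              (W (u + η * (p : ℝ) / (n : ℝ)) ω - W u ω) := by
          funext ω
          have e1 : τ (⟨p + 1, by omega⟩ : Fin (n + 2)).succ =
              u + η * ((p + 1 : ℕ) : ℝ) / n := by
            show f (p + 2) = _
            rw [hfmid (p + 2) (by omega) (by omega)]
            try norm_num
          have e0 : τ (⟨p + 1, by omega⟩ : Fin (n + 2)).castSucc =
              u + η * (p : ℝ) / n := by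
            show f (p + 1) = _
            rw [hfmid (p + 1) (by omega) (by omega)]
            try norm_num
          rw [e1, e0]
          push_cast
          ring
        have h1 : Measurable[MeasurableSpace.comap
            (fun ω => W (τ (⟨p + 1, by omega⟩ : Fin (n + 2)).succ) ω -
              W (τ (⟨p + 1, by omega⟩ : Fin (n + 2)).castSucc) ω) Real.measurableSpace]
            (fun ω => W (τ (⟨p + 1, by omega⟩ : Fin (n + 2)).succ) ω -
              W (τ (⟨p + 1, by omega⟩ : Fin (n + 2)).castSucc) ω) :=
          measurable_iff_comap_le.2 le_rfl
        have hle := le_iSup₂ (f := fun (i : Fin (n+2)) (_ : i ∈ Sm) =>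
          MeasurableSpace.comap
            (fun ω => W (τ i.succ) ω - W (τ i.castSucc) ω) Real.measurableSpace)
          (⟨p + 1, by omega⟩ : Fin (n + 2)) hmem
        have h2 := h1.mono hle le_rfl
        rw [heq]
        exact h2.add hIH
    have hSle : bmMsa W u η l ≤ ⨆ i ∈ Sm, MeasurableSpace.comap
        (fun ω => W (τ i.succ) ω - W (τ i.castSucc) ω) Real.measurableSpace := by
      apply iSup₂_le
      intro j hj
      obtain ⟨hj1, hj2⟩ := Finset.mem_Icc.1 hj
      have := key j hj1 (by rw [hn]; exact hj2)
      rw [hcast] at this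
      exact measurable_iff_comap_le.mp this
    have hTle : bmM1 W u r t ≤ ⨆ i ∈ Tm, MeasurableSpace.comap
        (fun ω => W (τ i.succ) ω - W (τ i.castSucc) ω) Real.measurableSpace := by
      apply sup_le
      · have h0 : W u = fun ω => W (τ (⟨0, by omega⟩ : Fin (n + 2)).succ) ω -
            W (τ (⟨0, by omega⟩ : Fin (n + 2)).castSucc) ω := by
          funext ω
          have e1 : τ (⟨0, by omega⟩ : Fin (n + 2)).succ = u := by
            show f 1 = _
            rw [hfmid 1 le_rfl (by omega)]
            try norm_num
          have e0 : τ (⟨0, by omega⟩ : Fin (n + 2)).castSucc = 0 := by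
            show f 0 = _
            rw [hf0]
          rw [e1, e0, hW.start]
          ring
        rw [h0]
        exact le_iSup₂ (f := fun (i : Fin (n+2)) (_ : i ∈ Tm) =>
          MeasurableSpace.comap
            (fun ω => W (τ i.succ) ω - W (τ i.castSucc) ω) Real.measurableSpace)
          (⟨0, by omega⟩ : Fin (n + 2)) (Or.inl rfl)
      · have h0 : (fun ω => W t ω - W r ω) =
            fun ω => W (τ (⟨n + 1, by omega⟩ : Fin (n + 2)).succ) ω -
              W (τ (⟨n + 1, by omega⟩ : Fin (n + 2)).castSucc) ω := by
          funext ω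
          have e1 : τ (⟨n + 1, by omega⟩ : Fin (n + 2)).succ = t := by
            show f (n + 2) = _
            exact hflast (n + 2) le_rfl
          have e0 : τ (⟨n + 1, by omega⟩ : Fin (n + 2)).castSucc = r := by
            show f (n + 1) = _
            rw [hfmid (n + 1) (by omega) le_rfl, hrdef]
            have : ((n + 1 - 1 : ℕ) : ℝ) = (n : ℝ) := by norm_num
            rw [this]
            field_simp
          rw [e1, e0]
        rw [h0]
        exact le_iSup₂ (f := fun (i : Fin (n+2)) (_ : i ∈ Tm) =>
          MeasurableSpace.comap
            (fun ω => W (τ i.succ) ω - W (τ i.castSucc) ω) Real.measurableSpace)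
          (⟨n + 1, by omega⟩ : Fin (n + 2)) (Or.inr rfl)
    exact indep_of_indep_of_le_left (indep_of_indep_of_le_right hdisj hTle) hSle
  have hmono : Monotone (bmMsa W u η) := by
    apply monotone_nat_of_le_succ
    intro l
    apply iSup₂_le
    intro j hj
    have hpt : u + η * ((2 * j : ℕ) : ℝ) / (2 : ℝ) ^ (l + 1) = u + η * (j : ℝ) / (2 : ℝ) ^ l := by
      push_cast
      have : (2:ℝ) ^ (l+1) = 2 * 2 ^ l := by ring
      rw [this]
      field_simp
    have hmem : 2 * j ∈ Finset.Icc 1 (2 ^ (l + 1)) := by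
      simp only [Finset.mem_Icc] at hj ⊢
      constructor <;> [omega; (have := hj.2; calc 2 * j ≤ 2 * 2 ^ l := by omega
                                                _ = 2 ^ (l+1) := by ring)]
    calc MeasurableSpace.comap (fun ω => W (u + η * (j : ℝ) / (2 : ℝ) ^ l) ω - W u ω)
          Real.measurableSpace
        = MeasurableSpace.comap
            (fun ω => W (u + η * ((2 * j : ℕ) : ℝ) / (2 : ℝ) ^ (l + 1)) ω - W u ω)
            Real.measurableSpace := by rw [hpt]
      _ ≤ bmMsa W u η (l + 1) := by
          apply le_iSup₂ (f := fun (j : ℕ) (_ : j ∈ Finset.Icc 1 (2 ^ (l+1))) =>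
            MeasurableSpace.comap
              (fun ω => W (u + η * (j : ℝ) / (2 : ℝ) ^ (l+1)) ω - W u ω) Real.measurableSpace)
            (2 * j) hmem
  have hIndepBig : Indep (⨆ l, bmMsa W u η l) (bmM1 W u r t) P :=
    indep_iSup_of_monotone hIndep_l hle_msa hm1le hmono
  -- events
  set E1 : ℕ → Set Ω := fun m => (W u) ⁻¹' (Set.Icc (m : ℝ) (m + γ4)) with hE1def
  set E3 : ℕ → Set Ω := fun m =>
    (fun ω => W t ω - W r ω) ⁻¹' (Set.Icc (lA - m + γ4) (lA - m + 2 * γ4)) with hE3def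
  have hE2inSup : MeasurableSet[⨆ l, bmMsa W u η l] (E2 η) := by
    apply MeasurableSet.iInter
    intro l
    apply MeasurableSet.iInter
    intro j
    apply MeasurableSet.iInter
    intro hj
    have hsub : MeasurableSpace.comap
        (fun ω => W (u + η * (j : ℝ) / (2 : ℝ) ^ l) ω - W u ω) Real.measurableSpace
        ≤ ⨆ l, bmMsa W u η l := by
      refine le_trans ?_ (le_iSup _ l)
      exact le_iSup₂ (f := fun (j : ℕ) (_ : j ∈ Finset.Icc 1 (2 ^ l)) =>
        MeasurableSpace.comap
          (fun ω => W (u + η * (j : ℝ) / (2 : ℝ) ^ l) ω - W u ω) Real.measurableSpace) j hj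
    apply hsub
    exact ⟨{x : ℝ | |x| ≤ γ4}, measurableSet_le measurable_abs measurable_const, rfl⟩
  have hE13 : ∀ m, MeasurableSet[bmM1 W u r t] (E1 m ∩ E3 m) := by
    intro m
    apply MeasurableSet.inter
    · exact le_sup_left (α := MeasurableSpace Ω) _ ⟨Set.Icc (m : ℝ) (m + γ4), measurableSet_Icc, rfl⟩
    · exact le_sup_right (α := MeasurableSpace Ω) _
        ⟨Set.Icc (lA - m + γ4) (lA - m + 2 * γ4), measurableSet_Icc, rfl⟩
  have h13 : ∀ m : ℕ, P (E1 m ∩ E3 m) = P (E1 m) * P (E3 m) := by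
    intro m
    set τ4 : Fin 4 → ℝ := ![0, u, r, t] with hτ4
    have hr0 : (0:ℝ) ≤ r := by linarith [hu.le, hηpos.le]
    have hpos4 : ∀ i, 0 ≤ τ4 i := by
      intro i
      fin_cases i <;> simp [hτ4] <;> linarith
    have hmono4 : Monotone τ4 := by
      intro i j hij
      fin_cases i <;> fin_cases j <;>
        first
          | (exact absurd hij (by decide))
          | (simp [hτ4]; try linarith)
          | rfl
    have hI4 := hW.indep_increments 3 τ4 hpos4 hmono4
    have hIF := hI4.indepFun (show (0 : Fin 3) ≠ 2 by decide)
    have hf0 : (fun ω => W (τ4 (0:Fin 3).succ) ω - W (τ4 (0:Fin 3).castSucc) ω) = W u := by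
      funext ω
      have e1 : τ4 (0:Fin 3).succ = u := by simp [hτ4]
      have e0 : τ4 (0:Fin 3).castSucc = 0 := by simp [hτ4]
      rw [e1, e0, hW.start]
      ring
    have hf2 : (fun ω => W (τ4 (2:Fin 3).succ) ω - W (τ4 (2:Fin 3).castSucc) ω) =
        fun ω => W t ω - W r ω := by
      funext ω
      have e1 : τ4 (2:Fin 3).succ = t := by simp [hτ4]
      have e0 : τ4 (2:Fin 3).castSucc = r := by
        rw [show ((2:Fin 3).castSucc) = (2 : Fin 4) from rfl]
        simp [hτ4, Matrix.cons_val_succ]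
      rw [e1, e0]
    rw [hf0, hf2] at hIF
    exact indepFun_iff_measure_inter_preimage_eq_mul.1 hIF _ _ measurableSet_Icc measurableSet_Icc
  have hprod : ∀ m : ℕ, P (E2 η ∩ (E1 m ∩ E3 m)) = P (E2 η) * (P (E1 m) * P (E3 m)) := by
    intro m
    rw [(Indep_iff _ _ _).1 hIndepBig _ _ hE2inSup (hE13 m), h13 m]
  -- Gaussian lower bounds
  have hPE1 : ∀ m : ℕ, ENNReal.ofReal (γ4 * ((Real.sqrt (2 * π * u))⁻¹ *
      Real.exp (-((m : ℝ) + γ4) ^ 2 / (2 * u)))) ≤ P (E1 m) := by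
    intro m
    have hv : Real.toNNReal u ≠ 0 := by
      simp only [ne_eq, Real.toNNReal_eq_zero, not_le]
      exact hu
    have hco : ((Real.toNNReal u : ℝ≥0) : ℝ) = u := Real.coe_toNNReal u hu.le
    have h0 : (fun ω => W u ω - W 0 ω) = W u := by
      funext ω; rw [hW.start]; ring
    have hmap : P.map (W u) = gaussianReal 0 (Real.toNNReal u) := by
      have h := hW.gauss_increments 0 u le_rfl hu.le
      rw [h0] at h
      simpa using h
    have hval : P (E1 m) = gaussianReal 0 (Real.toNNReal u) (Set.Icc (m : ℝ) (m + γ4)) := by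
      rw [← hmap, Measure.map_apply (hW.measurable u) measurableSet_Icc]
    rw [hval]
    have hlb := gauss_icc_lb (Real.toNNReal u) hv (m : ℝ) ((m : ℝ) + γ4) ((m : ℝ) + γ4)
      (by linarith) (fun z hz => by
        have h1 := hz.1; have h2 := hz.2
        have hm0 : (0:ℝ) ≤ (m:ℝ) := Nat.cast_nonneg m
        nlinarith)
    rw [hco] at hlb
    simpa [show (m:ℝ) + γ4 - m = γ4 by ring] using hlb
  have hPE3 : ∀ m : ℕ, ENNReal.ofReal (γ4 * ((Real.sqrt (2 * π * (t - r)))⁻¹ *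
      Real.exp (-(|lA| + (m : ℝ) + 2 * γ4) ^ 2 / (2 * (t - r))))) ≤ P (E3 m) := by
    intro m
    have htr : 0 < t - r := by linarith
    have hv : Real.toNNReal (t - r) ≠ 0 := by
      simp only [ne_eq, Real.toNNReal_eq_zero, not_le]
      exact htr
    have hco : ((Real.toNNReal (t - r) : ℝ≥0) : ℝ) = t - r := Real.coe_toNNReal _ htr.le
    have hmap : P.map (fun ω => W t ω - W r ω) = gaussianReal 0 (Real.toNNReal (t - r)) :=
      hW.gauss_increments r t (by positivity) hrt.le
    have hval : P (E3 m) = gaussianReal 0 (Real.toNNReal (t - r))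
        (Set.Icc (lA - m + γ4) (lA - m + 2 * γ4)) := by
      rw [← hmap, Measure.map_apply (f := fun ω => W t ω - W r ω) ((hW.measurable t).sub (hW.measurable r)) measurableSet_Icc]
    rw [hval]
    have hlb := gauss_icc_lb (Real.toNNReal (t - r)) hv (lA - m + γ4) (lA - m + 2 * γ4)
      (|lA| + (m : ℝ) + 2 * γ4) (by linarith) (fun z hz => by
        have h1 := hz.1; have h2 := hz.2
        have hm0 : (0:ℝ) ≤ (m:ℝ) := Nat.cast_nonneg m
        have ha1 : -|lA| ≤ lA := neg_abs_le lA
        have ha2 : lA ≤ |lA| := le_abs_self lA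
        nlinarith)
    rw [hco] at hlb
    simpa [show lA - m + 2*γ4 - (lA - m + γ4) = γ4 by ring] using hlb
  -- inclusion into the target set and pointwise bound
  set B : Set Ω := {ω | a ≤ Real.exp (W t ω) ∧ Real.exp (W t ω) ≤ b} with hBdef
  have hSmB : ∀ m : ℕ, E2 η ∩ (E1 m ∩ E3 m) ⊆ B := by
    intro m ω hω
    obtain ⟨h2, h1, h3⟩ := hω
    have hr1 : |W r ω - W u ω| ≤ γ4 := by
      have h2' := Set.mem_iInter.1 h2 0
      have h2'' := Set.mem_iInter.1 (Set.mem_iInter.1 h2' 1) (by simp)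
      have : u + η * ((1:ℕ) : ℝ) / (2:ℝ) ^ (0:ℕ) = r := by norm_num [hrdef]
      rwa [this] at h2''
    have h1' : (m : ℝ) ≤ W u ω ∧ W u ω ≤ m + γ4 := h1
    have h3' : lA - m + γ4 ≤ W t ω - W r ω ∧ W t ω - W r ω ≤ lA - m + 2 * γ4 := h3
    have habs := abs_le.1 hr1
    have hWt1 : lA ≤ W t ω := by
      have : W t ω = W u ω + (W r ω - W u ω) + (W t ω - W r ω) := by ring
      rw [this]
      linarith [h1'.1, habs.1, h3'.1]
    have hWt2 : W t ω ≤ lB := by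
      have : W t ω = W u ω + (W r ω - W u ω) + (W t ω - W r ω) := by ring
      rw [this]
      have : lA + 4 * γ4 ≤ lB := by rw [hγ4def]; linarith
      linarith [h1'.2, habs.2, h3'.2]
    constructor
    · calc a = Real.exp lA := (Real.exp_log ha).symm
        _ ≤ Real.exp (W t ω) := Real.exp_le_exp.2 hWt1
    · calc Real.exp (W t ω) ≤ Real.exp lB := Real.exp_le_exp.2 hWt2
        _ = b := Real.exp_log hb
  have hlow : ∀ m : ℕ, ∀ᵐ ω ∂P, ω ∈ E2 η ∩ (E1 m ∩ E3 m) →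
      ENNReal.ofReal (Real.exp (c * (η * Real.exp ((m : ℝ) - γ4)))) ≤
        ENNReal.ofReal (Real.exp (c * ∫ s in (0:ℝ)..t, Real.exp (W s ω))) := by
    intro m
    filter_upwards [hW.ae_continuous] with ω hω hmem
    obtain ⟨h2, h1, h3⟩ := hmem
    have h1' : (m : ℝ) ≤ W u ω ∧ W u ω ≤ (m:ℝ) + γ4 := h1
    have hkey : ∀ s ∈ Set.Icc u r, (m : ℝ) - γ4 ≤ W s ω := by
      intro s hs
      rcases eq_or_lt_of_le hs.1 with heq | hlt
      · rw [← heq]; linarith [h1'.1]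
      · set x : ℝ := (s - u) / η with hxdef
        have hx0 : 0 < x := div_pos (by linarith) hηpos
        have hx1 : x ≤ 1 := by
          rw [hxdef, div_le_one hηpos]
          have := hs.2
          rw [hrdef] at this
          linarith
        set jf : ℕ → ℕ := fun l => ⌈x * 2 ^ l⌉₊ with hjfdef
        have hj1 : ∀ l, 1 ≤ jf l := fun l => Nat.ceil_pos.2 (by positivity)
        have hjle : ∀ l, jf l ≤ 2 ^ l := by
          intro l
          apply Nat.ceil_le.2
          push_cast
          nlinarith [pow_pos (show (0:ℝ) < 2 by norm_num) l]
        set y : ℕ → ℝ := fun l => u + η * (jf l : ℝ) / (2:ℝ) ^ l with hydef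
        have hs' : s = u + η * x := by rw [hxdef]; field_simp; ring
        have hybound : ∀ l, s ≤ y l ∧ y l ≤ s + η / 2 ^ l := by
          intro l
          have hc1 : x * 2 ^ l ≤ (jf l : ℝ) := Nat.le_ceil _
          have hc2 : (jf l : ℝ) < x * 2 ^ l + 1 := Nat.ceil_lt_add_one (by positivity)
          have hp : (0:ℝ) < (2:ℝ) ^ l := by positivity
          constructor
          · have hxle : x ≤ (jf l : ℝ) / 2 ^ l := by rw [le_div_iff₀ hp]; linarith
            have := mul_le_mul_of_nonneg_left hxle hηpos.le
            rw [hs', hydef]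
            calc u + η * x ≤ u + η * ((jf l : ℝ) / 2 ^ l) := by linarith
              _ = u + η * (jf l : ℝ) / 2 ^ l := by ring
          · have hxge : (jf l : ℝ) / 2 ^ l ≤ x + 1 / 2 ^ l := by
              rw [div_le_iff₀ hp]
              have h2p : (x + 1 / 2 ^ l) * 2 ^ l = x * 2 ^ l + 1 := by field_simp
              rw [h2p]; linarith
            have := mul_le_mul_of_nonneg_left hxge hηpos.le
            rw [hs', hydef]
            calc u + η * (jf l : ℝ) / 2 ^ l = u + η * ((jf l : ℝ) / 2 ^ l) := by ring
              _ ≤ u + η * (x + 1 / 2 ^ l) := by linarith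
              _ = u + η * x + η / 2 ^ l := by ring
        have hyIcc : ∀ l, y l ∈ Set.Icc u r := by
          intro l
          have hp : (0:ℝ) < (2:ℝ) ^ l := by positivity
          have hjlr : (jf l : ℝ) ≤ (2:ℝ) ^ l := by
            have := hjle l
            exact_mod_cast Nat.cast_le.2 this
          constructor
          · rw [hydef]
            have : 0 ≤ η * (jf l : ℝ) / 2 ^ l := by positivity
            linarith
          · rw [hydef, hrdef]
            have : η * (jf l : ℝ) / 2 ^ l ≤ η := by
              rw [div_le_iff₀ hp]
              calc η * (jf l : ℝ) ≤ η * (2:ℝ) ^ l := mul_le_mul_of_nonneg_left hjlr hηpos.le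
                _ = η * 2 ^ l := rfl
            linarith
        have hbd : ∀ l, |W (y l) ω - W u ω| ≤ γ4 := by
          intro l
          have h2' := Set.mem_iInter.1 h2 l
          exact Set.mem_iInter.1 (Set.mem_iInter.1 h2' (jf l)) (Finset.mem_Icc.2 ⟨hj1 l, hjle l⟩)
        have hyto : Tendsto y atTop (nhds s) := by
          have h0 : Tendsto (fun l : ℕ => η / 2 ^ l) atTop (nhds 0) := by
            have hh := tendsto_pow_atTop_nhds_zero_of_lt_one
              (show (0:ℝ) ≤ 1/2 by norm_num) (show (1:ℝ)/2 < 1 by norm_num)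
            have := hh.const_mul η
            rw [mul_zero] at this
            apply this.congr
            intro l
            rw [div_pow, one_pow]
            ring
          have hub : Tendsto (fun l : ℕ => s + η / 2 ^ l) atTop (nhds s) := by
            have := tendsto_const_nhds (x := s) (f := atTop (α := ℕ)) |>.add h0
            simpa using this
          exact tendsto_of_tendsto_of_tendsto_of_le_of_le tendsto_const_nhds hub
            (fun l => (hybound l).1) (fun l => (hybound l).2)
        have hWto : Tendsto (fun l => W (y l) ω) atTop (nhds (W s ω)) := by
          have hs0 : (0:ℝ) ≤ s := by linarith [hs.1, hu.le]
          have hcw : ContinuousWithinAt (fun z => W z ω) (Set.Ici 0) s := hω s hs0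
          apply hcw.tendsto.comp
          apply tendsto_nhdsWithin_of_tendsto_nhds_of_eventually_within _ hyto
          exact Filter.Eventually.of_forall (fun l => le_trans hu.le (hyIcc l).1)
        apply ge_of_tendsto hWto
        apply Filter.Eventually.of_forall
        intro l
        have hb := (abs_le.1 (hbd l)).1
        linarith [h1'.1]
    apply ENNReal.ofReal_le_ofReal
    apply Real.exp_le_exp.2
    apply mul_le_mul_of_nonneg_left ?_ hc.le
    have hcont : ContinuousOn (fun z => Real.exp (W z ω)) (Set.Ici 0) :=
      Real.continuous_exp.comp_continuousOn hω
    have hr0 : (0:ℝ) ≤ r := by linarith [hu.le, hηpos.le]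
    have hi : ∀ p q : ℝ, 0 ≤ p → p ≤ q →
        IntervalIntegrable (fun z => Real.exp (W z ω)) MeasureTheory.volume p q := by
      intro p q hp hpq
      apply ContinuousOn.intervalIntegrable
      apply hcont.mono
      rw [Set.uIcc_of_le hpq]
      intro z hz
      exact le_trans hp hz.1
    have i1 := hi 0 u le_rfl hu.le
    have i2 := hi u r hu.le hur.le
    have i3 := hi r t hr0 hrt.le
    have i23 := hi u t hu.le hu'.le
    have hsplit : ∫ s in (0:ℝ)..t, Real.exp (W s ω) =
        (∫ s in (0:ℝ)..u, Real.exp (W s ω)) + ((∫ s in u..r, Real.exp (W s ω)) +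
        (∫ s in r..t, Real.exp (W s ω))) := by
      have e1 := intervalIntegral.integral_add_adjacent_intervals i1 i23
      have e2 := intervalIntegral.integral_add_adjacent_intervals i2 i3
      rw [e2, e1]
    have hn1 : 0 ≤ ∫ s in (0:ℝ)..u, Real.exp (W s ω) :=
      intervalIntegral.integral_nonneg hu.le (fun z _ => (Real.exp_pos _).le)
    have hn3 : 0 ≤ ∫ s in r..t, Real.exp (W s ω) :=
      intervalIntegral.integral_nonneg hrt.le (fun z _ => (Real.exp_pos _).le)
    have hmid : η * Real.exp ((m:ℝ) - γ4) ≤ ∫ s in u..r, Real.exp (W s ω) := by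
      have hcm := intervalIntegral.integral_mono_on hur.le intervalIntegrable_const i2
        (fun z hz => Real.exp_le_exp.2 (hkey z hz))
      rw [intervalIntegral.integral_const] at hcm
      have hru : r - u = η := by rw [hrdef]; ring
      rw [hru, smul_eq_mul] at hcm
      exact hcm
    rw [hsplit]
    linarith
  -- main chain
  have hchain : ∀ m : ℕ,
      ENNReal.ofReal (Real.exp (c * (η * Real.exp ((m : ℝ) - γ4)))) *
        P (E2 η ∩ (E1 m ∩ E3 m)) ≤
      ∫⁻ ω in B, ENNReal.ofReal (Real.exp (c * ∫ s in (0:ℝ)..t, Real.exp (W s ω))) ∂P := by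
    intro m
    have hSmeas : MeasurableSet (E2 η ∩ (E1 m ∩ E3 m)) := by
      apply (hE2meas η).inter
      apply MeasurableSet.inter
      · exact (hW.measurable u) measurableSet_Icc
      · exact ((hW.measurable t).sub (hW.measurable r)) measurableSet_Icc
    calc ENNReal.ofReal (Real.exp (c * (η * Real.exp ((m : ℝ) - γ4)))) *
          P (E2 η ∩ (E1 m ∩ E3 m))
        = ∫⁻ _ in E2 η ∩ (E1 m ∩ E3 m),
            ENNReal.ofReal (Real.exp (c * (η * Real.exp ((m : ℝ) - γ4)))) ∂P :=
          (setLIntegral_const _ _).symm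
      _ ≤ ∫⁻ ω in E2 η ∩ (E1 m ∩ E3 m),
            ENNReal.ofReal (Real.exp (c * ∫ s in (0:ℝ)..t, Real.exp (W s ω))) ∂P := by
          apply lintegral_mono_ae
          exact (ae_restrict_iff' hSmeas).2 (hlow m)
      _ ≤ ∫⁻ ω in B, ENNReal.ofReal (Real.exp (c * ∫ s in (0:ℝ)..t, Real.exp (W s ω))) ∂P :=
          lintegral_mono_set (hSmB m)
  -- conclude
  by_contra hI
  set I := ∫⁻ ω in B, ENNReal.ofReal (Real.exp (c * ∫ s in (0:ℝ)..t, Real.exp (W s ω))) ∂P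
    with hIdef
  have htr : 0 < t - r := by linarith
  set ε2 : ℝ := (P (E2 η)).toReal with hε2def
  have hε2pos : 0 < ε2 := ENNReal.toReal_pos hk0 (measure_ne_top P _)
  have hε2eq : ENNReal.ofReal ε2 = P (E2 η) := ENNReal.ofReal_toReal (measure_ne_top P _)
  set K1 : ℝ := (Real.sqrt (2 * π * u))⁻¹ with hK1def
  set K3 : ℝ := (Real.sqrt (2 * π * (t - r)))⁻¹ with hK3def
  have hK1 : 0 < K1 := by
    rw [hK1def]
    have : 0 < Real.sqrt (2 * π * u) := Real.sqrt_pos.2 (by positivity)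
    positivity
  have hK3 : 0 < K3 := by
    rw [hK3def]
    have : 0 < Real.sqrt (2 * π * (t - r)) := Real.sqrt_pos.2 (by positivity)
    positivity
  set φ : ℝ → ℝ := fun x => Real.exp (c * (η * Real.exp (x - γ4))) *
      (ε2 * ((γ4 * (K1 * Real.exp (-(x + γ4) ^ 2 / (2 * u)))) *
        (γ4 * (K3 * Real.exp (-(|lA| + x + 2 * γ4) ^ 2 / (2 * (t - r))))))) with hφdef
  have hφle : ∀ m : ℕ, ENNReal.ofReal (φ m) ≤ I := by
    intro m
    refine le_trans ?_ (hchain m)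
    rw [hprod m]
    have e1 : ENNReal.ofReal (φ m) =
        ENNReal.ofReal (Real.exp (c * (η * Real.exp ((m:ℝ) - γ4)))) *
          (ENNReal.ofReal ε2 *
            (ENNReal.ofReal (γ4 * (K1 * Real.exp (-((m:ℝ) + γ4) ^ 2 / (2 * u)))) *
             ENNReal.ofReal (γ4 * (K3 *
               Real.exp (-(|lA| + (m:ℝ) + 2 * γ4) ^ 2 / (2 * (t - r))))))) := by
      rw [← ENNReal.ofReal_mul (by positivity), ← ENNReal.ofReal_mul (by positivity),
        ← ENNReal.ofReal_mul (Real.exp_nonneg _)]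
    rw [e1]
    refine mul_le_mul' le_rfl ?_
    refine mul_le_mul' hε2eq.le ?_
    exact mul_le_mul' (hPE1 m) (hPE3 m)
  -- `φ` tends to infinity
  set c₁ : ℝ := c * η * Real.exp (-γ4) with hc₁def
  have hc₁ : 0 < c₁ := by rw [hc₁def]; positivity
  set A : ℝ := 1 / u + 1 / (t - r) with hAdef
  set Bc : ℝ := γ4 ^ 2 / u + (|lA| + 2 * γ4) ^ 2 / (t - r) with hBcdef
  set ψ : ℝ → ℝ := fun x => c * (η * Real.exp (x - γ4)) + (-(x + γ4) ^ 2 / (2 * u)) +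
      (-(|lA| + x + 2 * γ4) ^ 2 / (2 * (t - r))) with hψdef
  have hψt : Tendsto ψ atTop atTop := by
    apply tendsto_atTop_mono ?_ (aux_tendsto c₁ A Bc hc₁)
    intro x
    have hx1 : c * (η * Real.exp (x - γ4)) = c₁ * Real.exp x := by
      rw [hc₁def, show x - γ4 = x + -γ4 by ring, Real.exp_add]; ring
    have hsq1 : (x + γ4) ^ 2 ≤ 2 * x ^ 2 + 2 * γ4 ^ 2 := by nlinarith [sq_nonneg (x - γ4)]
    have hsq3 : (|lA| + x + 2 * γ4) ^ 2 ≤ 2 * x ^ 2 + 2 * (|lA| + 2 * γ4) ^ 2 := by nlinarith [sq_nonneg (x - (|lA| + 2 * γ4))]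
    have hd1 : (x + γ4) ^ 2 / (2 * u) ≤ (2 * x ^ 2 + 2 * γ4 ^ 2) / (2 * u) :=
      div_le_div_of_nonneg_right hsq1 (by positivity) |>.trans_eq rfl
    have hd3 : (|lA| + x + 2 * γ4) ^ 2 / (2 * (t - r)) ≤
        (2 * x ^ 2 + 2 * (|lA| + 2 * γ4) ^ 2) / (2 * (t - r)) :=
      div_le_div_of_nonneg_right hsq3 (by positivity) |>.trans_eq rfl
    have he1 : (2 * x ^ 2 + 2 * γ4 ^ 2) / (2 * u) = x ^ 2 / u + γ4 ^ 2 / u := by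
      field_simp
    have he3 : (2 * x ^ 2 + 2 * (|lA| + 2 * γ4) ^ 2) / (2 * (t - r)) =
        x ^ 2 / (t - r) + (|lA| + 2 * γ4) ^ 2 / (t - r) := by
      field_simp
    have hA : A * x ^ 2 = x ^ 2 / u + x ^ 2 / (t - r) := by rw [hAdef]; field_simp
    rw [hψdef]
    simp only []
    rw [hx1, neg_div, neg_div]
    rw [he1] at hd1
    rw [he3] at hd3
    rw [hBcdef]
    linarith [hd1, hd3, hA]
  have hφeq : ∀ x, φ x = (ε2 * ((γ4 * K1) * (γ4 * K3))) * Real.exp (ψ x) := by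
    intro x
    rw [hφdef, hψdef]
    simp only []
    rw [Real.exp_add, Real.exp_add]
    ring
  have hκ : 0 < ε2 * ((γ4 * K1) * (γ4 * K3)) := by positivity
  have hφt : Tendsto φ atTop atTop := by
    refine Tendsto.congr (fun x => (hφeq x).symm) ?_
    exact (Real.tendsto_exp_atTop.comp hψt).const_mul_atTop hκ
  -- contradiction
  have hIne : I ≠ ⊤ := hI
  obtain ⟨x0, hx0⟩ := eventually_atTop.1 (hφt.eventually_ge_atTop (I.toReal + 1))
  set m : ℕ := ⌈x0⌉₊ with hmdef
  have hφm : I.toReal + 1 ≤ φ m := hx0 m (Nat.le_ceil x0)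
  have h1 : ENNReal.ofReal (I.toReal + 1) ≤ ENNReal.ofReal (φ m) :=
    ENNReal.ofReal_le_ofReal hφm
  have h2 : I < ENNReal.ofReal (I.toReal + 1) := by
    conv_lhs => rw [← ENNReal.ofReal_toReal hIne]
    exact (ENNReal.ofReal_lt_ofReal_iff (by positivity)).2 (lt_add_one _)
  exact absurd (h2.trans_le (h1.trans (hφle m))) (lt_irrefl I)
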